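/- Let F : ℝ → ℝ be twice differentiable, bounded below with infimum m, and suppose F''(x) ≤ M for all x, where M ≥ 0. Then for every x ∈ ℝ, |F'(x)| ≤ (1 + M/2) · √(F(x) − m). -/

import Mathlib

/-- Key Taylor-type bound: for all `t`, `F (x + t) ≤ F x + F' x * t + M/2 * t^2`. -/
lemma taylor_bound (F : ℝ → ℝ) (M : ℝ)
    (hdiff : ∀ x, DifferentiableAt ℝ F x)
    (hdiff2 : ∀ x, DifferentiableAt ℝ (deriv F) x)
    (hM2 : ∀ x, deriv (deriv F) x ≤ M) (x t : ℝ) :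
    F (x + t) ≤ F x + deriv F x * t + M / 2 * t ^ 2 := by
  set φ : ℝ → ℝ := fun t => deriv F x + M * t - deriv F (x + t) with hφ
  have hφd : ∀ t, HasDerivAt φ (M - deriv (deriv F) (x + t)) t := by
    intro t
    have h1 : HasDerivAt (fun t : ℝ => deriv F x + M * t) (M) t := by
      simpa using ((hasDerivAt_id t).const_mul M).const_add (deriv F x)
    have h2 : HasDerivAt (fun t : ℝ => deriv F (x + t)) (deriv (deriv F) (x + t)) t := by
      have := ((hdiff2 (x + t)).hasDerivAt).comp t ((hasDerivAt_id t).const_add x)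
      simpa [Function.comp_def] using this
    exact h1.sub h2
  have hφmono : Monotone φ := by
    apply monotone_of_deriv_nonneg
    · exact fun t => (hφd t).differentiableAt
    · intro t
      rw [(hφd t).deriv]
      linarith [hM2 (x + t)]
  have hφ0 : φ 0 = 0 := by simp [hφ]
  set g : ℝ → ℝ := fun t => F x + deriv F x * t + M / 2 * t ^ 2 - F (x + t) with hg
  have hgd : ∀ t, HasDerivAt g (φ t) t := by
    intro t
    have h1 : HasDerivAt (fun t : ℝ => F x + deriv F x * t + M / 2 * t ^ 2)
        (deriv F x + M * t) t := by
      have ha : HasDerivAt (fun t : ℝ => F x + deriv F x * t) (deriv F x) t := by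
        simpa using ((hasDerivAt_id t).const_mul (deriv F x)).const_add (F x)
      have hb : HasDerivAt (fun t : ℝ => M / 2 * t ^ 2) (M * t) t := by
        have := (hasDerivAt_pow 2 t).const_mul (M / 2)
        exact this.congr_deriv (by push_cast; ring)
      exact ha.add hb
    have h2 : HasDerivAt (fun t : ℝ => F (x + t)) (deriv F (x + t)) t := by
      have := ((hdiff (x + t)).hasDerivAt).comp t ((hasDerivAt_id t).const_add x)
      simpa [Function.comp_def] using this
    exact h1.sub h2
  have hg0 : g 0 = 0 := by simp [hg]
  have hgert : 0 ≤ g t := by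
    rcases le_total 0 t with ht | ht
    · have hmono : MonotoneOn g (Set.Ici 0) := by
        apply monotoneOn_of_deriv_nonneg (convex_Ici 0)
        · exact fun s _ => ((hgd s).differentiableAt).continuousAt.continuousWithinAt
        · exact fun s _ => ((hgd s).differentiableAt).differentiableWithinAt
        · intro s hs
          rw [(hgd s).deriv]
          have : (0:ℝ) ≤ s := le_of_lt (by simpa using hs)
          calc (0:ℝ) = φ 0 := hφ0.symm
            _ ≤ φ s := hφmono this
      have := hmono (Set.self_mem_Ici) (Set.mem_Ici.mpr ht) ht
      linarith [hg0]
    · have hanti : AntitoneOn g (Set.Iic 0) := by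
        apply antitoneOn_of_deriv_nonpos (convex_Iic 0)
        · exact fun s _ => ((hgd s).differentiableAt).continuousAt.continuousWithinAt
        · exact fun s _ => ((hgd s).differentiableAt).differentiableWithinAt
        · intro s hs
          rw [(hgd s).deriv]
          have : s ≤ (0:ℝ) := le_of_lt (by simpa using hs)
          calc φ s ≤ φ 0 := hφmono this
            _ = 0 := hφ0
      have := hanti (Set.mem_Iic.mpr ht) Set.self_mem_Iic ht
      linarith [hg0]
  simpa [hg] using hgert

/-- Lemma 3.1 (core estimate): if `F` is twice differentiable, bounded below with
infimum `m`, and `F'' ≤ M` everywhere with `M ≥ 0`, then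
`|F'(x)| ≤ (1 + M/2) * √(F x - m)` for all `x`. -/
theorem stmt_0 (F : ℝ → ℝ) (M m : ℝ) (hM : 0 ≤ M)
    (hdiff : ∀ x, DifferentiableAt ℝ F x)
    (hdiff2 : ∀ x, DifferentiableAt ℝ (deriv F) x)
    (hglb : IsGLB (Set.range F) m)
    (hM2 : ∀ x, deriv (deriv F) x ≤ M) :
    ∀ x : ℝ, |deriv F x| ≤ (1 + M / 2) * Real.sqrt (F x - m) := by
  intro x
  have hlb : ∀ y, m ≤ F y := fun y => hglb.1 (Set.mem_range_self y)
  have hFx : 0 ≤ F x - m := by linarith [hlb x]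
  set s := Real.sqrt (F x - m) with hs
  have hs0 : 0 ≤ s := Real.sqrt_nonneg _
  have hs2 : s ^ 2 = F x - m := Real.sq_sqrt hFx
  rcases eq_or_lt_of_le hs0 with hseq | hspos
  · -- s = 0, so F x = m is a global min, deriv = 0
    have hFxm : F x = m := by
      have : F x - m = 0 := by rw [← hs2, ← hseq]; ring
      linarith
    have hmin : IsLocalMin F x := by
      apply Filter.Eventually.of_forall
      intro y
      rw [hFxm]; exact hlb y
    rw [hmin.deriv_eq_zero]
    simp
    positivity
  · -- s > 0
    have key : ∀ t : ℝ, m ≤ F x + deriv F x * t + M / 2 * t ^ 2 := fun t =>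
      le_trans (hlb (x + t)) (taylor_bound F M hdiff hdiff2 hM2 x t)
    rcases le_total 0 (deriv F x) with hd | hd
    · have h := key (-s)
      rw [abs_of_nonneg hd]
      have : deriv F x * s ≤ (F x - m) + M / 2 * s ^ 2 := by nlinarith
      rw [← hs2] at this
      have : deriv F x * s ≤ (1 + M / 2) * s * s := by nlinarith
      exact le_of_mul_le_mul_right (by linarith [this]) hspos
    · have h := key s
      rw [abs_of_nonpos hd]
      have : -deriv F x * s ≤ (F x - m) + M / 2 * s ^ 2 := by nlinarith
      rw [← hs2] at this
      have : -deriv F x * s ≤ (1 + M / 2) * s * s := by nlinarith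
      exact le_of_mul_le_mul_right (by linarith [this]) hspos
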